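/- Let G be an abelian group with a smooth increasing filtration {G_α : α < τ} indexed by an ordinal τ (i.e., G_α ⊆ G_{α+1} for all α, G_β = ⋃_{α<β} G_α for every limit ordinal β < τ, and G = ⋃_{α<τ} G_α). If G_0 is a free abelian group and the quotient G_{α+1}/G_α is free abelian for every α < τ, then G is a free abelian group. -/

import Mathlib

lemma eklof_exists_compl {G : Type*} [AddCommGroup G] (A B : AddSubgroup G) (hAB : A ≤ B)
    (hq : Module.Free ℤ (B ⧸ A.addSubgroupOf B)) :
    ∃ C : Submodule ℤ G, Module.Free ℤ C ∧ C ≤ B.toIntSubmodule ∧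
      Disjoint C A.toIntSubmodule ∧ B.toIntSubmodule ≤ A.toIntSubmodule ⊔ C := by
  classical
  set H := A.addSubgroupOf B with hH
  let π : ↥B →ₗ[ℤ] (↥B ⧸ H) := (QuotientAddGroup.mk' H).toIntLinearMap
  have hπ : Function.Surjective π := QuotientAddGroup.mk'_surjective H
  haveI := hq
  obtain ⟨s, hs⟩ := Module.projective_lifting_property π LinearMap.id hπ
  have hs' : ∀ q, π (s q) = q := fun q => congrArg (fun f => f q) (congrArg DFunLike.coe hs)
  let f : (↥B ⧸ H) →ₗ[ℤ] G := B.subtype.toIntLinearMap ∘ₗ s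
  have hf : ∀ q, f q = ((s q : ↥B) : G) := fun _ => rfl
  have hfinj : Function.Injective f := by
    intro x y hxy
    have : s x = s y := Subtype.ext hxy
    rw [← hs' x, ← hs' y, this]
  have hker : ∀ b : ↥B, π b = 0 ↔ (b : G) ∈ A := by
    intro b
    rw [show π b = QuotientAddGroup.mk' H b from rfl, QuotientAddGroup.mk'_apply,
      QuotientAddGroup.eq_zero_iff, hH, AddSubgroup.mem_addSubgroupOf]
  refine ⟨LinearMap.range f, Module.Free.of_equiv (LinearEquiv.ofInjective f hfinj), ?_, ?_, ?_⟩
  · rintro x ⟨q, rfl⟩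
    exact (s q).2
  · rw [Submodule.disjoint_def]
    rintro x ⟨q, rfl⟩ hxA
    have : π (s q) = 0 := (hker (s q)).mpr hxA
    rw [hs' q] at this
    rw [this]
    exact map_zero f
  · intro x hx
    have hxB : x ∈ B := hx
    set b : ↥B := ⟨x, hxB⟩ with hb
    have h1 : π (b - s (π b)) = 0 := by rw [map_sub, hs' (π b), sub_self]
    have h2 : ((b - s (π b) : ↥B) : G) ∈ A := (hker _).mp h1
    refine Submodule.mem_sup.mpr ⟨((b - s (π b) : ↥B) : G), h2, f (π b), ⟨π b, rfl⟩, ?_⟩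
    simp [hf]
    rfl


open Order in
lemma eklof_indep {G : Type*} [AddCommGroup G] {τ : Ordinal}
    (p : Ordinal → Submodule ℤ G) (pmono : Monotone p)
    (C : {a : Ordinal // a < τ} → Submodule ℤ G)
    (hCle : ∀ α, C α ≤ p (succ α.1))
    (hCdisj : ∀ α, Disjoint (C α) (p α.1)) :
    iSupIndep (fun i : Option {a : Ordinal // a < τ} => i.elim (p 0) C) := by
  classical
  set N := (fun i : Option {a : Ordinal // a < τ} => i.elim (p 0) C) with hN
  set lvl := (fun i : Option {a : Ordinal // a < τ} => i.elim 0 (fun α => succ α.1)) with hlvl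
  have hNlvl : ∀ i, N i ≤ p (lvl i) := by
    rintro (_ | α)
    · exact le_rfl
    · exact hCle α
  set S := fun (i : Option {a : Ordinal // a < τ}) (β : Ordinal) =>
    ⨆ (j) (_ : j ≠ i) (_ : lvl j ≤ β), N j with hS
  have hSmono : ∀ i, Monotone (S i) := by
    intro i β γ h
    refine iSup_le fun j => iSup_le fun hji => iSup_le fun hlv => ?_
    exact le_iSup_of_le j (le_iSup_of_le hji (le_iSup_of_le (hlv.trans h) le_rfl))
  have hSle : ∀ i δ, S i δ ≤ p δ := by
    intro i δ
    refine iSup_le fun j => iSup_le fun _ => iSup_le fun hlv => ?_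
    exact (hNlvl j).trans (pmono hlv)
  have hNle : ∀ i (δ : Ordinal) (_ : lvl i ≤ δ) (j) (_ : j ≠ i), N j ≤ S j δ → True := fun _ _ _ _ _ _ => trivial
  have hmemS : ∀ (i j) (β : Ordinal), j ≠ i → lvl j ≤ β → N j ≤ S i β := by
    intro i j β hji hlv
    exact le_iSup_of_le j (le_iSup_of_le hji (le_iSup_of_le hlv le_rfl))
  -- uniqueness of level: if lvl j = succ γ with γ < τ, then j = some ⟨γ, _⟩
  have hlvluniq : ∀ (j) (γ : Ordinal) (hγ : γ < τ), lvl j = succ γ → j = some ⟨γ, hγ⟩ := by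
    rintro (_ | α) γ hγ h
    · exact absurd h.symm (succ_ne_bot γ)
    · have h' : succ α.1 = succ γ := h
      have : α.1 = γ := by
        have h1 : α.1 ≤ γ := lt_succ_iff.mp (h' ▸ lt_succ α.1)
        have h2 : γ ≤ α.1 := lt_succ_iff.mp (h'.symm ▸ lt_succ γ)
        exact le_antisymm h1 h2
      exact congrArg some (Subtype.ext this)
  have key : ∀ β (i : Option {a : Ordinal // a < τ}), lvl i ≤ β →
      ∀ x, x ∈ N i → x ∈ S i β → x = 0 := by
    intro β
    induction β using Ordinal.induction with
    | h β IH =>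
      rcases Ordinal.zero_or_succ_or_isSuccLimit β with hβ | ⟨γ, hβ⟩ | hβ
      · subst hβ
        intro i hi x hxN hxS
        have : S i 0 ≤ ⊥ := by
          refine iSup_le fun j => iSup_le fun hji => iSup_le fun hlv => ?_
          rcases j with _ | α
          · rcases i with _ | α
            · exact absurd rfl hji
            · -- i = some α, j = none : N none = p 0, but lvl i = succ α.1 ≤ 0, absurd
              exact absurd (nonpos_iff_eq_zero.mp hi) (succ_ne_bot α.1)
          · exact absurd (nonpos_iff_eq_zero.mp hlv) (succ_ne_bot α.1)
        exact (Submodule.mem_bot ℤ).mp (this hxS)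
      · subst hβ
        intro i hi x hxN hxS
        by_cases hγτ : γ < τ
        · set jγ : Option {a : Ordinal // a < τ} := some ⟨γ, hγτ⟩ with hjγ
          by_cases hij : i = jγ
          · -- x ∈ C ⟨γ⟩ and S i (succ γ) ≤ p γ
            have hle : S i (succ γ) ≤ p γ := by
              refine iSup_le fun j => iSup_le fun hji => iSup_le fun hlv => ?_
              rcases lt_or_eq_of_le hlv with hlt | heq
              · exact (hNlvl j).trans (pmono (lt_succ_iff.mp hlt))
              · exact absurd ((hlvluniq j γ hγτ heq).trans hij.symm) hji
            have hxC : x ∈ C ⟨γ, hγτ⟩ := by rw [hij] at hxN; exact hxN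
            exact (hCdisj ⟨γ, hγτ⟩).le_bot ⟨hxC, hle hxS⟩
          · -- decompose
            have hd : S i (succ γ) ≤ S i γ ⊔ C ⟨γ, hγτ⟩ := by
              refine iSup_le fun j => iSup_le fun hji => iSup_le fun hlv => ?_
              rcases lt_or_eq_of_le hlv with hlt | heq
              · exact le_sup_of_le_left (hmemS i j γ hji (lt_succ_iff.mp hlt))
              · rw [hlvluniq j γ hγτ heq]
                exact le_sup_right
            obtain ⟨y, hy, c, hc, hxy⟩ := Submodule.mem_sup.mp (hd hxS)
            have hilvl : lvl i ≤ γ := by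
              rcases lt_or_eq_of_le hi with hlt | heq
              · exact lt_succ_iff.mp hlt
              · exact absurd (hlvluniq i γ hγτ heq) hij
            have hxp : x ∈ p γ := pmono hilvl (hNlvl i hxN)
            have hyp : y ∈ p γ := hSle i γ hy
            have hcp : c ∈ p γ := by
              have : c = x - y := by rw [← hxy]; abel
              rw [this]; exact sub_mem hxp hyp
            have hc0 : c = 0 := (hCdisj ⟨γ, hγτ⟩).le_bot ⟨hc, hcp⟩
            have hxy' : x = y := by rw [← hxy, hc0, add_zero]
            exact IH γ (lt_succ γ) i hilvl x hxN (hxy' ▸ hy)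
        · -- γ ≥ τ : every level is ≤ γ
          have hlev : ∀ j : Option {a : Ordinal // a < τ}, lvl j ≤ γ := by
            rintro (_ | α)
            · exact zero_le (a := γ)
            · exact succ_le_of_lt (lt_of_lt_of_le α.2 (not_lt.mp hγτ))
          have hle : S i (succ γ) ≤ S i γ := by
            refine iSup_le fun j => iSup_le fun hji => iSup_le fun _ => ?_
            exact hmemS i j γ hji (hlev j)
          exact IH γ (lt_succ γ) i (hlev i) x hxN (hle hxS)
      · -- limit
        intro i hi x hxN hxS
        have hlvlt : ∀ j : Option {a : Ordinal // a < τ}, lvl j ≤ β → lvl j < β := by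
          rintro (_ | α) h
          · exact hβ.pos
          · refine lt_of_le_of_ne h (fun hh => (Order.not_isSuccLimit_succ α.1) ?_)
            have hh' : succ α.1 = β := hh
            rw [hh']; exact hβ
        have hmem : x ∈ ⨆ (γ : {g : Ordinal // g < β}), S i γ.1 := by
          refine (iSup_le fun j => iSup_le fun hji => iSup_le fun hlv => ?_ : S i β ≤ _) hxS
          exact le_iSup_of_le ⟨lvl j, hlvlt j hlv⟩ (hmemS i j (lvl j) hji le_rfl)
        haveI : Nonempty {g : Ordinal // g < β} := ⟨⟨0, hβ.pos⟩⟩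
        obtain ⟨γ, hγ⟩ := (Submodule.mem_iSup_of_directed _
          (fun a b => ⟨⟨max a.1 b.1, max_lt a.2 b.2⟩,
            hSmono i (le_max_left _ _), hSmono i (le_max_right _ _)⟩)).mp hmem
        refine IH (max γ.1 (lvl i)) (max_lt γ.2 (hlvlt i hi)) i (le_max_right _ _) x hxN ?_
        exact hSmono i (le_max_left _ _) hγ
  rw [iSupIndep_def]
  intro i
  rw [Submodule.disjoint_def]
  intro x hxN hxS
  have hlev : ∀ j : Option {a : Ordinal // a < τ}, lvl j ≤ τ := by
    rintro (_ | α)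
    · exact zero_le (a := τ)
    · exact succ_le_of_lt α.2
  refine key τ i (hlev i) x hxN ?_
  have : (⨆ (j) (_ : j ≠ i), N j) ≤ S i τ := by
    refine iSup_le fun j => iSup_le fun hji => ?_
    exact hmemS i j τ hji (hlev j)
  exact this hxS

theorem eklof_free_of_smooth_filtration
    (G : Type*) [AddCommGroup G] (τ : Ordinal)
    (F : Ordinal → AddSubgroup G)
    (hmono : ∀ α β : Ordinal, α ≤ β → β < τ → F α ≤ F β)
    (hlim : ∀ β : Ordinal, β < τ → Order.IsSuccLimit β →
      F β = ⨆ α : {a : Ordinal // a < β}, F α.1)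
    (hunion : (⨆ α : {a : Ordinal // a < τ}, F α.1) = ⊤)
    (h0 : Module.Free ℤ (F 0))
    (hquot : ∀ α : Ordinal, α < τ →
      Module.Free ℤ ((F (α + 1)) ⧸ ((F α).addSubgroupOf (F (α + 1))))) :
    Module.Free ℤ G := by
  classical
  by_cases hτ0 : τ = 0
  · -- trivial case : G is trivial
    subst hτ0
    haveI : IsEmpty {a : Ordinal // a < (0 : Ordinal)} :=
      ⟨fun a => not_lt_of_ge (zero_le (a := a.1)) a.2⟩
    rw [iSup_of_empty] at hunion
    haveI : Subsingleton G := by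
      constructor
      intro a b
      have ha : a ∈ (⊥ : AddSubgroup G) := hunion ▸ AddSubgroup.mem_top a
      have hb : b ∈ (⊥ : AddSubgroup G) := hunion ▸ AddSubgroup.mem_top b
      rw [AddSubgroup.mem_bot] at ha hb
      rw [ha, hb]
    exact Module.Free.of_subsingleton ℤ G
  have hτpos : 0 < τ := pos_iff_ne_zero.mpr hτ0
  -- extended filtration
  set F' : Ordinal → AddSubgroup G := fun α => if α < τ then F α else ⊤ with hF'
  have hF'lt : ∀ {α}, α < τ → F' α = F α := fun h => if_pos h
  have hF'ge : ∀ {α}, ¬ α < τ → F' α = ⊤ := fun h => if_neg h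
  have hmono' : Monotone F' := by
    intro α β hab
    by_cases hβ : β < τ
    · rw [hF'lt hβ, hF'lt (lt_of_le_of_lt hab hβ)]
      exact hmono α β hab hβ
    · rw [hF'ge hβ]; exact le_top
  -- directedness helper
  have hdir : ∀ (β : Ordinal), β ≤ τ →
      Directed (· ≤ ·) (fun α : {a : Ordinal // a < β} => F α.1) := by
    intro β hβ a b
    refine ⟨⟨max a.1 b.1, max_lt a.2 b.2⟩, ?_, ?_⟩
    · exact hmono a.1 _ (le_max_left _ _) (lt_of_lt_of_le (max_lt a.2 b.2) hβ)
    · exact hmono b.1 _ (le_max_right _ _) (lt_of_lt_of_le (max_lt a.2 b.2) hβ)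
  -- quotient freeness for the extended filtration
  have hquot' : ∀ α : Ordinal, α < τ →
      Module.Free ℤ ((F' (α + 1)) ⧸ ((F' α).addSubgroupOf (F' (α + 1)))) := by
    intro α hα
    by_cases hα1 : α + 1 < τ
    · rw [show F' (α+1) = F (α+1) from hF'lt hα1, show F' α = F α from hF'lt hα]
      exact hquot α hα
    · -- τ = α + 1, and F α = ⊤
      have h234 : τ = α + 1 := le_antisymm (not_lt.mp hα1)
        (by rw [Ordinal.add_one_eq_succ]; exact Order.succ_le_of_lt hα)
      have hFα : F α = ⊤ := by
        rw [← hunion]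
        refine le_antisymm (le_iSup (fun β : {a : Ordinal // a < τ} => F β.1) ⟨α, hα⟩)
          (iSup_le fun β => ?_)
        have hβα : β.1 ≤ α := by
          have h5 : β.1 < α + 1 := h234 ▸ β.2
          rw [Ordinal.add_one_eq_succ, Order.lt_succ_iff] at h5
          exact h5
        exact hmono β.1 α hβα hα
      have hsub : Subsingleton ((F' (α + 1)) ⧸ ((F' α).addSubgroupOf (F' (α + 1)))) := by
        constructor
        intro a b
        induction a using QuotientAddGroup.induction_on with
        | H a =>
        induction b using QuotientAddGroup.induction_on with
        | H b =>
        rw [QuotientAddGroup.eq]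
        rw [AddSubgroup.mem_addSubgroupOf, hF'lt hα, hFα]
        exact AddSubgroup.mem_top _
      exact Module.Free.of_subsingleton ℤ _
  -- complements
  have hAB : ∀ α : Ordinal, F' α ≤ F' (α + 1) := fun α => hmono' (le_self_add)
  choose Cc hCfree hCle hCdisj hCsup using
    fun α : {a : Ordinal // a < τ} =>
      eklof_exists_compl (F' α.1) (F' (α.1 + 1)) (hAB α.1) (hquot' α.1 α.2)
  set p : Ordinal → Submodule ℤ G := fun α => AddSubgroup.toIntSubmodule (F' α) with hp
  have pmono : Monotone p := fun a b h => AddSubgroup.toIntSubmodule.monotone (hmono' h)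
  have hCle' : ∀ α : {a : Ordinal // a < τ}, Cc α ≤ p (Order.succ α.1) := by
    intro α
    rw [← Ordinal.add_one_eq_succ]
    exact hCle α
  set N := (fun i : Option {a : Ordinal // a < τ} => i.elim (p 0) Cc) with hN
  have hindep : iSupIndep N := eklof_indep p pmono Cc hCle' hCdisj
  -- span
  have hspan : ∀ β, β ≤ τ → p β ≤ iSup N := by
    intro β
    induction β using Ordinal.induction with
    | h β IH =>
      intro hβτ
      rcases Ordinal.zero_or_succ_or_isSuccLimit β with h | ⟨γ, h⟩ | h
      · subst h
        exact le_iSup N none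
      · subst h
        have hγτ : γ < τ := lt_of_lt_of_le (Order.lt_succ γ) hβτ
        have h1 : p (Order.succ γ) ≤ p γ ⊔ Cc ⟨γ, hγτ⟩ := by
          rw [← Ordinal.add_one_eq_succ]
          exact hCsup ⟨γ, hγτ⟩
        refine h1.trans (sup_le (IH γ (Order.lt_succ γ) (le_of_lt hγτ)) ?_)
        exact le_iSup_of_le (some ⟨γ, hγτ⟩) le_rfl
      · intro x hx
        have hx' : ∃ α : {a : Ordinal // a < β}, x ∈ F α.1 := by
          haveI : Nonempty {a : Ordinal // a < β} := ⟨⟨0, h.pos⟩⟩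
          rcases lt_or_eq_of_le hβτ with hlt | heq
          · have hxF : x ∈ F β := by
              rw [← hF'lt hlt]
              exact hx
            rw [hlim β hlt h] at hxF
            exact (AddSubgroup.mem_iSup_of_directed (hdir β hβτ)).mp hxF
          · subst heq
            have hxF : x ∈ ⨆ α : {a : Ordinal // a < β}, F α.1 :=
              hunion ▸ AddSubgroup.mem_top x
            exact (AddSubgroup.mem_iSup_of_directed (hdir β le_rfl)).mp hxF
        obtain ⟨α, hα⟩ := hx'
        refine IH α.1 α.2 (le_of_lt (lt_of_lt_of_le α.2 hβτ)) ?_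
        show x ∈ AddSubgroup.toIntSubmodule (F' α.1)
        rw [hF'lt (lt_of_lt_of_le α.2 hβτ)]
        exact hα
  have hsupN : iSup N = ⊤ := by
    refine le_antisymm le_top ?_
    have h1 : p τ = ⊤ := by
      show AddSubgroup.toIntSubmodule (F' τ) = ⊤
      rw [hF'ge (lt_irrefl τ)]
      exact OrderIso.map_top _
    calc (⊤ : Submodule ℤ G) = p τ := h1.symm
      _ ≤ iSup N := hspan τ le_rfl
  have hint : DirectSum.IsInternal N :=
    (DirectSum.isInternal_submodule_iff_iSupIndep_and_iSup_eq_top N).mpr ⟨hindep, hsupN⟩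
  haveI hfree : ∀ i, Module.Free ℤ (N i) := by
    rintro (_ | α)
    · haveI := h0
      show Module.Free ℤ (AddSubgroup.toIntSubmodule (F' 0))
      have h00 : F' 0 = F 0 := hF'lt hτpos
      rw [h00]
      have e : ↥(F 0) ≃+ ↥((F 0).toIntSubmodule) :=
        ⟨⟨fun x => ⟨x.1, x.2⟩, fun x => ⟨x.1, x.2⟩, fun _ => rfl, fun _ => rfl⟩, fun _ _ => rfl⟩
      exact Module.Free.of_equiv e.toIntLinearEquiv
    · exact hCfree α
  exact Module.Free.of_equiv (LinearEquiv.ofBijective (DirectSum.coeLinearMap N) hint)
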